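/- arXiv:1312.0042 — 5 statements merged into one kernel-verified Lean document; each statement's English description precedes it below -/
import Mathlib

section
/- Let p > 0, 0 < a < p, 0 ≤ u < p, and L ≥ 0 be integers. Define f : ℕ → ℕ recursively by f(0) = u and f(i+1) = f(i) + a·⌈(p − f(i))/a⌉ − p. If m is the least index with f(m) ≤ L, then the least index d with (u + d·a) mod p ≤ L exists, satisfies (u + d·a) mod p = f(m), and equals d = (m·p − u + f(m))/a (in particular a divides m·p − u + f(m)). -/
private lemma ceil_bounds (x a : ℕ) (ha : 0 < a) :
    x ≤ a * (x ⌈/⌉ a) ∧ a * (x ⌈/⌉ a) ≤ x + a - 1 := by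
  rw [Nat.ceilDiv_eq_add_pred_div]
  have h1 := Nat.div_add_mod (x + a - 1) a
  have h2 := Nat.mod_lt (x + a - 1) ha
  omega

private def stepsAux (p a : ℕ) (f : ℕ → ℕ) : ℕ → ℕ
  | 0 => 0
  | i + 1 => stepsAux p a f i + ((p - f i) ⌈/⌉ a)

/-- Let `p > 0`, `0 < a < p`, `0 ≤ u < p`, `L ≥ 0`. Define `f(0) = u` and
`f(i+1) = f(i) + a·⌈(p - f(i))/a⌉ - p`. If `m` is the least index with `f(m) ≤ L`, then
the least index `d` with `(u + d·a) mod p ≤ L` exists, satisfies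
`(u + d·a) mod p = f(m)`, and equals `d = (m·p - u + f(m))/a`; in particular `a` divides
`m·p - u + f(m)`. -/
theorem stmt4 (p a u L : ℕ) (hp : 0 < p) (ha : 0 < a) (hap : a < p) (hu : u < p)
    (f : ℕ → ℕ) (hf0 : f 0 = u)
    (hfs : ∀ i, f (i + 1) = f i + a * ((p - f i) ⌈/⌉ a) - p)
    (m : ℕ) (hm : IsLeast {i : ℕ | f i ≤ L} m) :
    ∃ d : ℕ, IsLeast {i : ℕ | (u + i * a) % p ≤ L} d ∧
      (u + d * a) % p = f m ∧
      (a : ℤ) ∣ ((m : ℤ) * p - u + f m) ∧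
      (d : ℤ) = ((m : ℤ) * p - u + f m) / a := by
  set n := stepsAux p a f with hn
  -- invariant
  have inv : ∀ i, f i < p ∧ u + n i * a = i * p + f i := by
    intro i
    induction i with
    | zero => simp [hn, stepsAux, hf0, hu]
    | succ i ih =>
      obtain ⟨hfi, heq⟩ := ih
      obtain ⟨hlo, hhi⟩ := ceil_bounds (p - f i) a ha
      have hstep := hfs i
      have hns : n (i + 1) = n i + ((p - f i) ⌈/⌉ a) := rfl
      have hexp : n (i + 1) * a = n i * a + a * ((p - f i) ⌈/⌉ a) := by rw [hns]; ring
      have hp1 : (i + 1) * p = i * p + p := by ring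
      constructor <;> omega
  -- key facts per round
  have hceil : ∀ i, f i + a * ((p - f i) ⌈/⌉ a) - 1 < p + a - 1 ∧
      p ≤ f i + a * ((p - f i) ⌈/⌉ a) := by
    intro i
    have hfi := (inv i).1
    obtain ⟨hlo, hhi⟩ := ceil_bounds (p - f i) a ha
    omega
  -- in-round mod formula
  have round : ∀ i d, n i ≤ d → d < n (i + 1) → (u + d * a) % p = f i + (d - n i) * a := by
    intro i d hd1 hd2
    have hfi := (inv i).1
    have heq := (inv i).2
    have hns : n (i + 1) = n i + ((p - f i) ⌈/⌉ a) := rfl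
    obtain ⟨hlo, hhi⟩ := ceil_bounds (p - f i) a ha
    have hklt : d - n i < (p - f i) ⌈/⌉ a := by omega
    have hsmall : f i + (d - n i) * a < p := by
      have : (d - n i) * a + a ≤ ((p - f i) ⌈/⌉ a) * a := by
        have : d - n i + 1 ≤ (p - f i) ⌈/⌉ a := hklt
        calc (d - n i) * a + a = (d - n i + 1) * a := by ring
        _ ≤ ((p - f i) ⌈/⌉ a) * a := Nat.mul_le_mul_right a this
      have h2 : a * ((p - f i) ⌈/⌉ a) = ((p - f i) ⌈/⌉ a) * a := by ring
      omega
    have hda : d * a = n i * a + (d - n i) * a := by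
      rw [← Nat.add_sub_cancel' hd1, Nat.add_mul, Nat.add_sub_cancel_left]
    have hfin : u + d * a = i * p + (f i + (d - n i) * a) := by omega
    rw [hfin, Nat.add_comm, Nat.add_mul_mod_self_right]
    exact Nat.mod_eq_of_lt hsmall
  -- covering lemma
  have cover : ∀ M d, d < n M → ∃ i, i < M ∧ n i ≤ d ∧ d < n (i + 1) := by
    intro M
    induction M with
    | zero => intro d hd; simp [hn, stepsAux] at hd
    | succ M ih =>
      intro d hd
      by_cases h : d < n M
      · obtain ⟨i, h1, h2, h3⟩ := ih d h
        exact ⟨i, by omega, h2, h3⟩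
      · exact ⟨M, by omega, by omega, hd⟩
  refine ⟨n m, ⟨?_, ?_⟩, ?_, ?_, ?_⟩
  · -- n m is in the set
    have heq := (inv m).2
    have hfm := (inv m).1
    have : (u + n m * a) % p = f m := by
      rw [heq, Nat.add_comm, Nat.add_mul_mod_self_right]
      exact Nat.mod_eq_of_lt hfm
    simp only [Set.mem_setOf_eq, this]
    exact hm.1
  · -- lower bound
    intro d hd
    by_contra hlt
    push_neg at hlt
    obtain ⟨i, him, h1, h2⟩ := cover m d hlt
    have hval := round i d h1 h2
    simp only [Set.mem_setOf_eq] at hd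
    rw [hval] at hd
    have : f i ≤ L := by omega
    have := hm.2 this
    omega
  · have heq := (inv m).2
    have hfm := (inv m).1
    rw [heq, Nat.add_comm, Nat.add_mul_mod_self_right]
    exact Nat.mod_eq_of_lt hfm
  · have heq := (inv m).2
    refine ⟨n m, ?_⟩
    have : (u : ℤ) + n m * a = m * p + f m := by exact_mod_cast heq
    linarith
  · have heq := (inv m).2
    have : ((m : ℤ) * p - u + f m) = (n m) * a := by
      have : (u : ℤ) + n m * a = m * p + f m := by exact_mod_cast heq
      linarith
    rw [this]
    rw [Int.mul_ediv_cancel _ (by exact_mod_cast ha.ne')]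
end

section
/- Let p > 0 and 0 < a < p be integers, let v be an integer with 0 ≤ v < a, and let k = ⌈(p − v)/a⌉. Then v + k·a ≥ p and v + k·a − p = (v + (a − (p mod a))) mod a. (In other words, the successive round-start values of the arithmetic progression modulo p with common difference a form an arithmetic progression over Z_a with common difference a − r, where r = p mod a.) -/
/-- Let `p > 0`, `0 < a < p` and `0 ≤ v < a`, and let `k = ⌈(p - v)/a⌉`. Then
`v + k·a ≥ p` and `v + k·a - p = (v + (a - (p mod a))) mod a`. -/
theorem stmt5 (p a v : ℕ) (hp : 0 < p) (ha : 0 < a) (hap : a < p) (hv : v < a) :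
    p ≤ v + ((p - v) ⌈/⌉ a) * a ∧
      v + ((p - v) ⌈/⌉ a) * a - p = (v + (a - p % a)) % a := by
  set k := (p - v) ⌈/⌉ a with hk
  have h1 : p - v ≤ a * k := le_smul_ceilDiv ha
  have h2 : k * a ≤ p - v + a - 1 := by
    rw [hk, Nat.ceilDiv_eq_add_pred_div]
    exact Nat.div_mul_le_self _ _
  have hd1 : p ≤ v + k * a := by nlinarith [Nat.sub_add_cancel (le_of_lt (hv.trans hap))]
  refine ⟨hd1, ?_⟩
  set d := v + k * a - p with hd
  have hda : d < a := by omega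
  have hr : p % a < a := Nat.mod_lt _ ha
  have hdp : (d + p % a) % a = v := by
    have h3 : (d + p) % a = v % a := by
      have : d + p = v + k * a := by omega
      rw [this, Nat.add_mul_mod_self_right]
    rw [Nat.add_mod, Nat.mod_eq_of_lt hda, Nat.mod_eq_of_lt hv] at h3
    exact h3
  rw [← hdp, Nat.mod_add_mod]
  have : d + p % a + (a - p % a) = d + a := by omega
  rw [this, Nat.add_mod_right, Nat.mod_eq_of_lt hda]
end

section
/- Let p > 0, 0 < a < p, 0 ≤ u < p, and L ≥ 0 be integers. Then {i ≥ 0 : (u + i·a) mod p ≤ L} = {i ≥ 0 : ((p − u + L) mod p + i·(p − a)) mod p ≤ L}. Consequently, the least element d of the first set exists if and only if the least element d′ of the second set exists, and in that case d = d′. -/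
lemma stmt6_aux (p L v : ℕ) (hp : 0 < p) (hv : v < p) :
    (p + L - v) % p ≤ L ↔ v ≤ L := by
  rcases le_or_gt v L with h | h
  · have he : p + L - v = p + (L - v) := by omega
    rw [he, Nat.add_mod_left]
    exact ⟨fun _ => h, fun _ => le_trans (Nat.mod_le _ _) (by omega)⟩
  · rw [Nat.mod_eq_of_lt (by omega)]
    omega

lemma stmt6_key (p a u L : ℕ) (hp : 0 < p) (ha : 0 < a) (hap : a < p) (hu : u < p)
    (i : ℕ) :
    (u + i * a) % p ≤ L ↔ ((p - u + L) % p + i * (p - a)) % p ≤ L := by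
  set v := (u + i * a) % p with hvdef
  have hv : v < p := Nat.mod_lt _ hp
  have hq := Nat.div_add_mod (u + i * a) p
  set q := (u + i * a) / p with hqdef
  have hmodeq : (p - u + L + i * (p - a)) % p = (p + L - v) % p := by
    have : ((p - u + L + i * (p - a) : ℕ) : ℤ) % p = ((p + L - v : ℕ) : ℤ) % p := by
      have h1 : ((p - u + L + i * (p - a) : ℕ) : ℤ)
          = (p : ℤ) - u + L + i * ((p : ℤ) - a) := by
        push_cast [Nat.cast_sub hu.le, Nat.cast_sub hap.le]
        ring
      have h2 : ((p + L - v : ℕ) : ℤ) = (p : ℤ) + L - v := by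
        push_cast [Nat.cast_sub (by omega : v ≤ p + L)]
        ring
      rw [h1, h2]
      have hdvd : ((p : ℤ) - u + L + i * ((p : ℤ) - a)) - ((p : ℤ) + L - v)
          = p * ((i : ℤ) - q) := by
        have hqz : (p : ℤ) * q + v = u + i * a := by exact_mod_cast hq
        ring_nf
        ring_nf at hqz
        linarith
      have hdvd2 : (p : ℤ) ∣ ((p : ℤ) + L - v) - ((p : ℤ) - u + L + i * ((p : ℤ) - a)) :=
        ⟨(q : ℤ) - i, by linarith [hdvd]⟩
      exact Int.modEq_iff_dvd.mpr hdvd2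
    exact_mod_cast this
  rw [Nat.mod_add_mod, hmodeq]
  exact (stmt6_aux p L v hp hv).symm

/-- Let `p > 0`, `0 < a < p`, `0 ≤ u < p`, and `L ≥ 0` be integers. Then
`{i ≥ 0 : (u + i·a) mod p ≤ L} = {i ≥ 0 : ((p - u + L) mod p + i·(p - a)) mod p ≤ L}`.
Consequently the least element of the first set exists iff the least element of the
second set exists, and in that case they are equal. -/
theorem stmt6 (p a u L : ℕ) (hp : 0 < p) (ha : 0 < a) (hap : a < p) (hu : u < p) :
    {i : ℕ | (u + i * a) % p ≤ L} =
        {i : ℕ | ((p - u + L) % p + i * (p - a)) % p ≤ L} ∧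
      ∀ d : ℕ, IsLeast {i : ℕ | (u + i * a) % p ≤ L} d ↔
        IsLeast {i : ℕ | ((p - u + L) % p + i * (p - a)) % p ≤ L} d := by
  have hset : {i : ℕ | (u + i * a) % p ≤ L} =
      {i : ℕ | ((p - u + L) % p + i * (p - a)) % p ≤ L} := by
    ext i
    exact stmt6_key p a u L hp ha hap hu i
  exact ⟨hset, fun d => by rw [hset]⟩
end

section
/- Let p be a prime, S a finite set of residues in Z_p with |S| = U, ℓ a natural number with 2^ℓ ≤ p, and t = ⌊p/2^ℓ⌋. Choose (a, b) uniformly at random from {1, …, p−1} × {0, …, p−1} and let X = #{x ∈ S : (a·x + b) mod p < t}. Then Var[X] ≤ E[X]. -/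
/-- The set of hash-function parameter pairs `(a, b) ∈ {1, …, p-1} × {0, …, p-1}`,
viewed inside `Z_p × Z_p`. -/
def hashPairs (p : ℕ) [Fact p.Prime] : Finset (ZMod p × ZMod p) :=
  Finset.univ.filter (fun ab : ZMod p × ZMod p => ab.1 ≠ 0)

/-- `X = #{x ∈ S : (a·x + b) mod p < t}`, the number of elements of `S` selected by the
level-`ℓ` coordinated sample with threshold `t` under the hash function `(a, b)`. -/
def sampleCount (p : ℕ) [Fact p.Prime] (S : Finset (ZMod p)) (t : ℕ)
    (ab : ZMod p × ZMod p) : ℕ :=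
  (S.filter (fun x => (ab.1 * x + ab.2).val < t)).card

/-- Expectation of `g` under the uniform distribution on `hashPairs p`
(which has `p·(p-1)` elements). -/
noncomputable def hashExpect (p : ℕ) [Fact p.Prime] (g : ZMod p × ZMod p → ℝ) : ℝ :=
  (∑ ab ∈ hashPairs p, g ab) / ((p : ℝ) * ((p : ℝ) - 1))

lemma valLt_card (p t : ℕ) [Fact p.Prime] (ht : t ≤ p) :
    (Finset.univ.filter (fun u : ZMod p => u.val < t)).card = t := by
  refine (Finset.card_nbij' (t := Finset.range t) (fun u => u.val) (fun a => (a : ZMod p))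
    ?_ ?_ ?_ ?_).trans (Finset.card_range t)
  · intro u hu; simp only [Finset.mem_coe, Finset.mem_filter] at hu; simp [hu.2]
  · intro a ha
    simp only [Finset.mem_coe, Finset.mem_range] at ha
    simp [ZMod.val_cast_of_lt (lt_of_lt_of_le ha ht), ha]
  · intro u hu; simp [ZMod.natCast_val, ZMod.cast_id]
  · intro a ha
    simp only [Finset.mem_coe, Finset.mem_range] at ha
    simp [ZMod.val_cast_of_lt (lt_of_lt_of_le ha ht)]

lemma hashPairs_card (p : ℕ) [Fact p.Prime] : (hashPairs p).card = (p - 1) * p := by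
  have : hashPairs p = (Finset.univ.filter (fun a : ZMod p => a ≠ 0)) ×ˢ Finset.univ := by
    ext ⟨a, b⟩; simp [hashPairs]
  rw [this, Finset.card_product, Finset.filter_ne', Finset.card_erase_of_mem (Finset.mem_univ _)]
  simp [ZMod.card]

lemma countOne (p t : ℕ) [Fact p.Prime] (ht : t ≤ p) (x : ZMod p) :
    ((hashPairs p).filter (fun ab => (ab.1 * x + ab.2).val < t)).card = (p - 1) * t := by
  have hcard : ((Finset.univ.filter (fun a : ZMod p => a ≠ 0)) ×ˢ
      (Finset.univ.filter (fun u : ZMod p => u.val < t))).card = (p - 1) * t := by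
    rw [Finset.card_product, Finset.filter_ne', Finset.card_erase_of_mem (Finset.mem_univ _),
      valLt_card p t ht]
    simp [ZMod.card]
  refine (Finset.card_nbij' (fun ab => (ab.1, ab.1 * x + ab.2)) (fun au => (au.1, au.2 - au.1 * x))
    ?_ ?_ ?_ ?_).trans hcard
  · intro ab hab
    simp only [Finset.mem_coe, hashPairs, Finset.mem_filter, Finset.mem_univ, true_and] at hab
    simp [Finset.mem_product, hab.1, hab.2]
  · intro au hau
    simp only [Finset.mem_coe, Finset.mem_product, Finset.mem_filter, Finset.mem_univ, true_and] at hau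
    simp only [Finset.mem_coe, hashPairs, Finset.mem_filter, Finset.mem_univ, true_and]
    constructor
    · exact hau.1
    · have : au.1 * x + (au.2 - au.1 * x) = au.2 := by ring
      rw [this]; exact hau.2
  · intro ab _; ext <;> simp <;> ring
  · intro au _; ext <;> simp <;> ring

lemma countTwo (p t : ℕ) [Fact p.Prime] (ht : t ≤ p) {x y : ZMod p} (hxy : x ≠ y) :
    ((hashPairs p).filter (fun ab =>
      (ab.1 * x + ab.2).val < t ∧ (ab.1 * y + ab.2).val < t)).card = t * t - t := by
  have hxy' : x - y ≠ 0 := sub_ne_zero_of_ne hxy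
  have hc : (x - y)⁻¹ * (x - y) = 1 := inv_mul_cancel₀ hxy'
  set F := Finset.univ.filter (fun u : ZMod p => u.val < t) with hF
  have hFc : F.card = t := valLt_card p t ht
  have hdiag : ((F ×ˢ F).filter (fun uv => uv.1 = uv.2)).card = t := by
    rw [← hFc]
    apply Finset.card_nbij' (fun uv => uv.1) (fun u => (u, u))
    · intro uv huv
      simp only [Finset.mem_coe, Finset.mem_filter, Finset.mem_product] at huv
      exact huv.1.1
    · intro u hu; simp [Finset.mem_filter, Finset.mem_product, Finset.mem_coe.mp hu]
    · intro uv huv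
      simp only [Finset.mem_coe, Finset.mem_filter, Finset.mem_product] at huv
      ext <;> simp [huv.2]
    · intro u _; rfl
  have hsplit := Finset.card_filter_add_card_filter_not
    (s := F ×ˢ F) (p := fun uv => uv.1 = uv.2)
  have hprod : (F ×ˢ F).card = t * t := by rw [Finset.card_product, hFc]
  have hT : ((F ×ˢ F).filter (fun uv => ¬ uv.1 = uv.2)).card = t * t - t := by omega
  refine (Finset.card_nbij'
    (fun ab => (ab.1 * x + ab.2, ab.1 * y + ab.2))
    (fun uv => ((uv.1 - uv.2) * (x - y)⁻¹, uv.1 - (uv.1 - uv.2) * (x - y)⁻¹ * x))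
    ?_ ?_ ?_ ?_).trans hT
  · intro ab hab
    simp only [Finset.mem_coe, hashPairs, Finset.mem_filter, Finset.mem_univ, true_and] at hab
    simp only [Finset.mem_coe, Finset.mem_filter, Finset.mem_product, hF, Finset.mem_univ, true_and]
    refine ⟨⟨hab.2.1, hab.2.2⟩, ?_⟩
    intro h
    have : ab.1 * (x - y) = 0 := by linear_combination h
    exact mul_ne_zero hab.1 hxy' this
  · intro uv huv
    simp only [Finset.mem_coe, Finset.mem_filter, Finset.mem_product, hF, Finset.mem_univ, true_and] at huv
    obtain ⟨⟨h1, h2⟩, hne⟩ := huv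
    simp only [Finset.mem_coe, hashPairs, Finset.mem_filter, Finset.mem_univ, true_and]
    refine ⟨mul_ne_zero (sub_ne_zero_of_ne hne) (inv_ne_zero hxy'), ?_, ?_⟩
    · have e : (uv.1 - uv.2) * (x - y)⁻¹ * x + (uv.1 - (uv.1 - uv.2) * (x - y)⁻¹ * x) = uv.1 := by
        ring
      rw [e]; exact h1
    · have e : (uv.1 - uv.2) * (x - y)⁻¹ * y + (uv.1 - (uv.1 - uv.2) * (x - y)⁻¹ * x) = uv.2 := by
        linear_combination (uv.2 - uv.1) * hc
      rw [e]; exact h2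
  · intro ab hab
    simp only [Finset.mem_coe, hashPairs, Finset.mem_filter, Finset.mem_univ, true_and] at hab
    have e1 : (ab.1 * x + ab.2 - (ab.1 * y + ab.2)) * (x - y)⁻¹ = ab.1 := by
      linear_combination ab.1 * hc
    ext
    · simpa using e1
    · simp only
      rw [e1]; ring
  · intro uv huv
    simp only [Finset.mem_coe, Finset.mem_filter, Finset.mem_product, hF, Finset.mem_univ, true_and] at huv
    ext
    · simp only; ring
    · simp only
      linear_combination (uv.2 - uv.1) * hc


section moments
variable (p : ℕ) [Fact p.Prime] (S : Finset (ZMod p)) (t : ℕ)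

lemma sample_ind (ab : ZMod p × ZMod p) :
    (sampleCount p S t ab : ℝ) = ∑ x ∈ S, (if (ab.1 * x + ab.2).val < t then (1:ℝ) else 0) := by
  rw [Finset.sum_boole, sampleCount]

lemma momentOne (ht : t ≤ p) :
    (∑ ab ∈ hashPairs p, (sampleCount p S t ab : ℝ)) = ((S.card * ((p - 1) * t) : ℕ) : ℝ) := by
  calc (∑ ab ∈ hashPairs p, (sampleCount p S t ab : ℝ))
      = ∑ ab ∈ hashPairs p, ∑ x ∈ S, (if (ab.1 * x + ab.2).val < t then (1:ℝ) else 0) :=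
        Finset.sum_congr rfl (fun ab _ => sample_ind p S t ab)
    _ = ∑ x ∈ S, ∑ ab ∈ hashPairs p, (if (ab.1 * x + ab.2).val < t then (1:ℝ) else 0) :=
        Finset.sum_comm
    _ = ∑ x ∈ S, ((((hashPairs p).filter (fun ab => (ab.1 * x + ab.2).val < t)).card : ℕ) : ℝ) :=
        Finset.sum_congr rfl (fun x _ => Finset.sum_boole _ _)
    _ = ∑ x ∈ S, (((p - 1) * t : ℕ) : ℝ) := by
        refine Finset.sum_congr rfl (fun x _ => ?_)
        rw [countOne p t ht x]
    _ = ((S.card * ((p - 1) * t) : ℕ) : ℝ) := by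
        rw [Finset.sum_const, nsmul_eq_mul]; push_cast; ring

lemma momentTwo (ht : t ≤ p) :
    (∑ ab ∈ hashPairs p, (sampleCount p S t ab : ℝ) ^ 2)
      = ((S.card * ((p - 1) * t + (S.card - 1) * (t * t - t)) : ℕ) : ℝ) := by
  have hsq : ∀ ab : ZMod p × ZMod p, (sampleCount p S t ab : ℝ) ^ 2
      = ∑ x ∈ S, ∑ y ∈ S, (if (ab.1 * x + ab.2).val < t ∧ (ab.1 * y + ab.2).val < t
          then (1:ℝ) else 0) := by
    intro ab
    rw [sq, sample_ind p S t ab, Finset.sum_mul_sum]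
    refine Finset.sum_congr rfl (fun x _ => Finset.sum_congr rfl (fun y _ => ?_))
    split_ifs with h1 h2 h3 h3 <;> simp_all
  calc (∑ ab ∈ hashPairs p, (sampleCount p S t ab : ℝ) ^ 2)
      = ∑ ab ∈ hashPairs p, ∑ x ∈ S, ∑ y ∈ S, (if (ab.1 * x + ab.2).val < t ∧
          (ab.1 * y + ab.2).val < t then (1:ℝ) else 0) :=
        Finset.sum_congr rfl (fun ab _ => hsq ab)
    _ = ∑ x ∈ S, ∑ ab ∈ hashPairs p, ∑ y ∈ S, (if (ab.1 * x + ab.2).val < t ∧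
          (ab.1 * y + ab.2).val < t then (1:ℝ) else 0) := Finset.sum_comm
    _ = ∑ x ∈ S, ∑ y ∈ S, ∑ ab ∈ hashPairs p, (if (ab.1 * x + ab.2).val < t ∧
          (ab.1 * y + ab.2).val < t then (1:ℝ) else 0) :=
        Finset.sum_congr rfl (fun x _ => Finset.sum_comm)
    _ = ∑ x ∈ S, ∑ y ∈ S, ((((hashPairs p).filter (fun ab => (ab.1 * x + ab.2).val < t ∧
          (ab.1 * y + ab.2).val < t)).card : ℕ) : ℝ) :=
        Finset.sum_congr rfl (fun x _ => Finset.sum_congr rfl (fun y _ => Finset.sum_boole _ _))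
    _ = ∑ x ∈ S, (((p - 1) * t + (S.card - 1) * (t * t - t) : ℕ) : ℝ) := by
        refine Finset.sum_congr rfl (fun x hx => ?_)
        rw [← Finset.add_sum_erase S _ hx]
        have hxx : (((hashPairs p).filter (fun ab => (ab.1 * x + ab.2).val < t ∧
            (ab.1 * x + ab.2).val < t)).card : ℝ) = (((p - 1) * t : ℕ) : ℝ) := by
          norm_cast
          rw [← countOne p t ht x]
          congr 1
          simp
        have hoff : ∀ y ∈ S.erase x, (((hashPairs p).filter (fun ab =>
            (ab.1 * x + ab.2).val < t ∧ (ab.1 * y + ab.2).val < t)).card : ℝ)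
            = ((t * t - t : ℕ) : ℝ) := by
          intro y hy
          rw [countTwo p t ht (Finset.ne_of_mem_erase hy).symm]
        rw [hxx, Finset.sum_congr rfl hoff, Finset.sum_const, nsmul_eq_mul,
          Finset.card_erase_of_mem hx]
        push_cast
        ring
    _ = ((S.card * ((p - 1) * t + (S.card - 1) * (t * t - t)) : ℕ) : ℝ) := by
        rw [Finset.sum_const, nsmul_eq_mul]; push_cast; ring

end moments

lemma keyNat (p t U : ℕ) (htp : t ≤ p) :
    (U * ((p - 1) * t + (U - 1) * (t * t - t))) * (p * (p - 1))
      ≤ (U * ((p - 1) * t)) * (p * (p - 1)) + (U * ((p - 1) * t)) * (U * ((p - 1) * t)) := by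
  have h2 : (t * t - t) * p ≤ ((p - 1) * t) * t := by
    have e1 : (t * t - t) * p = t * t * p - t * p := Nat.sub_mul _ _ _
    have e2 : ((p - 1) * t) * t = p * t * t - t * t := by
      rw [Nat.sub_mul, one_mul, Nat.sub_mul]
    rw [e1, e2]
    have h3 : t * t ≤ t * p := Nat.mul_le_mul_left t htp
    have h4 : t * t * p = p * t * t := by ring
    rw [h4]
    exact Nat.sub_le_sub_left h3 _
  have hgen : ∀ q r V : ℕ, V ≤ U → r * p ≤ q * t → t * (p - 1) = q →
      U * (q + V * r) * (p * (p - 1)) ≤ U * q * (p * (p - 1)) + (U * q) * (U * q) := by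
    intro q r V hV hqr hq
    have key2 : (U * (p - 1)) * (V * (r * p)) ≤ (U * (p - 1)) * (U * (q * t)) :=
      Nat.mul_le_mul_left _ (Nat.mul_le_mul hV hqr)
    calc U * (q + V * r) * (p * (p - 1))
        = U * q * (p * (p - 1)) + (U * (p - 1)) * (V * (r * p)) := by ring
      _ ≤ U * q * (p * (p - 1)) + (U * (p - 1)) * (U * (q * t)) :=
          Nat.add_le_add_left key2 _
      _ = U * q * (p * (p - 1)) + (U * q) * (U * (t * (p - 1))) := by ring
      _ = U * q * (p * (p - 1)) + (U * q) * (U * q) := by rw [hq]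
  exact hgen ((p - 1) * t) (t * t - t) (U - 1) (Nat.sub_le U 1) h2 (mul_comm t (p - 1))

lemma final_ineq (A B N : ℝ) (hN : 0 < N) (h : B * N ≤ A * N + A * A) :
    (B - 2 * (A / N) * A + N * (A / N) ^ 2) / N ≤ A / N := by
  rw [div_le_div_iff₀ hN hN]
  have e : (B - 2 * (A / N) * A + N * (A / N) ^ 2) * N = B * N - A * A := by
    field_simp
    ring
  rw [e]
  linarith


/-- Let `p` be a prime, `S` a finite set of residues in `Z_p` with `|S| = U`, `ℓ` a
natural number with `2^ℓ ≤ p`, and `t = ⌊p/2^ℓ⌋`. Choose `(a, b)` uniformly from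
`{1, …, p-1} × {0, …, p-1}` and let `X = #{x ∈ S : (a·x + b) mod p < t}`. Then
`Var[X] ≤ E[X]`. -/
theorem stmt11 (p : ℕ) [Fact p.Prime] (S : Finset (ZMod p)) (U : ℕ) (hS : S.card = U)
    (ℓ : ℕ) (hℓ : 2 ^ ℓ ≤ p) (t : ℕ) (ht : t = p / 2 ^ ℓ) :
    hashExpect p (fun ab =>
        ((sampleCount p S t ab : ℝ)
          - hashExpect p (fun ab' => (sampleCount p S t ab' : ℝ))) ^ 2)
      ≤ hashExpect p (fun ab => (sampleCount p S t ab : ℝ)) := by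
  have hp : p.Prime := Fact.out
  have hp1 : 1 ≤ p := hp.one_lt.le
  have htp : t ≤ p := ht ▸ Nat.div_le_self p _
  simp only [hashExpect]
  set N : ℝ := (p : ℝ) * ((p : ℝ) - 1) with hNdef
  set A : ℝ := ∑ ab ∈ hashPairs p, (sampleCount p S t ab : ℝ) with hAdef
  set B : ℝ := ∑ ab ∈ hashPairs p, (sampleCount p S t ab : ℝ) ^ 2 with hBdef
  have hN : (0 : ℝ) < N := by
    have h2 : (2 : ℝ) ≤ (p : ℝ) := by exact_mod_cast hp.two_le
    rw [hNdef]; nlinarith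
  have hNcast : ((p * (p - 1) : ℕ) : ℝ) = N := by
    rw [Nat.cast_mul, Nat.cast_sub hp1, Nat.cast_one, hNdef]
  have hcardcast : (((hashPairs p).card : ℕ) : ℝ) = N := by
    rw [hashPairs_card, Nat.cast_mul, Nat.cast_sub hp1, Nat.cast_one, hNdef]; ring
  have hvar : (∑ ab ∈ hashPairs p, ((sampleCount p S t ab : ℝ) - A / N) ^ 2)
      = B - 2 * (A / N) * A + N * (A / N) ^ 2 := by
    have expand : ∀ ab : ZMod p × ZMod p, ((sampleCount p S t ab : ℝ) - A / N) ^ 2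
        = (sampleCount p S t ab : ℝ) ^ 2 - 2 * (A / N) * (sampleCount p S t ab : ℝ)
          + (A / N) ^ 2 := by intro ab; ring
    rw [Finset.sum_congr rfl (fun ab _ => expand ab), Finset.sum_add_distrib,
      Finset.sum_sub_distrib, Finset.sum_const, nsmul_eq_mul, hcardcast, ← Finset.mul_sum,
      ← hAdef, ← hBdef]
  rw [hvar]
  apply final_ineq A B N hN
  have hBN : B * N ≤ A * N + A * A := by
    rw [hAdef, hBdef, momentOne p S t htp, momentTwo p S t htp, hS, ← hNcast]
    exact_mod_cast keyNat p t U htp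
  exact hBN
end

section
/- Let 0 < δ < 1 and let β = ⌈24·ln(1/δ)⌉. Then the binomial tail ∑_{k > β/2} C(β, k)·(3/10)^k·(7/10)^{β−k} is at most δ, where the sum ranges over integers k with β/2 < k ≤ β. -/
/-- Let `0 < δ < 1` and `β = ⌈24·ln(1/δ)⌉`. Then the binomial tail
`∑_{β/2 < k ≤ β} C(β, k)·(3/10)^k·(7/10)^(β-k)` is at most `δ`. -/
theorem stmt15 (δ : ℝ) (hδ0 : 0 < δ) (hδ1 : δ < 1) (β : ℕ)
    (hβ : β = ⌈24 * Real.log (1 / δ)⌉₊) :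
    ∑ k ∈ (Finset.range (β + 1)).filter (fun k : ℕ => (β : ℝ) / 2 < (k : ℝ)),
        (β.choose k : ℝ) * (3 / 10) ^ k * (7 / 10) ^ (β - k) ≤ δ := by
  set L := Real.log (1 / δ) with hLdef
  have hL : 0 < L := Real.log_pos (by rw [lt_div_iff₀ hδ0]; linarith)
  have hβL : (24 : ℝ) * L ≤ (β : ℝ) := by rw [hβ]; exact Nat.le_ceil _
  set x : ℝ := ((3 : ℝ) / 7) ^ ((β : ℝ) / 2) with hxdef
  have hx0 : 0 < x := Real.rpow_pos_of_pos (by norm_num) _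
  -- termwise bound
  have step1 : ∑ k ∈ (Finset.range (β + 1)).filter (fun k : ℕ => (β : ℝ) / 2 < (k : ℝ)),
      (β.choose k : ℝ) * (3 / 10) ^ k * (7 / 10) ^ (β - k)
      ≤ ∑ k ∈ (Finset.range (β + 1)).filter (fun k : ℕ => (β : ℝ) / 2 < (k : ℝ)),
      (β.choose k : ℝ) * (x * (7 / 10) ^ β) := by
    apply Finset.sum_le_sum
    intro k hk
    simp only [Finset.mem_filter, Finset.mem_range] at hk
    obtain ⟨hk1, hk2⟩ := hk
    have hkβ : k ≤ β := Nat.lt_succ_iff.mp hk1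
    have heq : ((3 : ℝ) / 10) ^ k * (7 / 10) ^ (β - k) = (3 / 7) ^ k * (7 / 10) ^ β := by
      have : ((3 : ℝ) / 10) ^ k = (3 / 7) ^ k * (7 / 10) ^ k := by
        rw [← mul_pow]; norm_num
      rw [this, mul_assoc, ← pow_add, Nat.add_sub_cancel' hkβ]
    have hle : ((3 : ℝ) / 7) ^ k ≤ x := by
      rw [← Real.rpow_natCast ((3:ℝ)/7) k]
      exact Real.rpow_le_rpow_of_exponent_ge (by norm_num) (by norm_num) hk2.le
    calc (β.choose k : ℝ) * (3 / 10) ^ k * (7 / 10) ^ (β - k)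
        = (β.choose k : ℝ) * ((3 / 7) ^ k * (7 / 10) ^ β) := by rw [mul_assoc, heq]
      _ ≤ (β.choose k : ℝ) * (x * (7 / 10) ^ β) := by
          apply mul_le_mul_of_nonneg_left _ (Nat.cast_nonneg _)
          exact mul_le_mul_of_nonneg_right hle (by positivity)
  have step2 : ∑ k ∈ (Finset.range (β + 1)).filter (fun k : ℕ => (β : ℝ) / 2 < (k : ℝ)),
      (β.choose k : ℝ) * (x * (7 / 10) ^ β) ≤ (2 : ℝ) ^ β * (x * (7 / 10) ^ β) := by
    rw [← Finset.sum_mul]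
    apply mul_le_mul_of_nonneg_right _ (by positivity)
    have hsub : ∑ k ∈ (Finset.range (β + 1)).filter (fun k : ℕ => (β : ℝ) / 2 < (k : ℝ)),
        (β.choose k : ℝ) ≤ ∑ k ∈ Finset.range (β + 1), (β.choose k : ℝ) := by
      apply Finset.sum_le_sum_of_subset_of_nonneg (Finset.filter_subset _ _)
      intro i _ _; positivity
    refine hsub.trans ?_
    rw [← Nat.cast_sum]
    rw [Nat.sum_range_choose]
    push_cast; norm_num
  -- numeric bound
  have step3 : (2 : ℝ) ^ β * (x * (7 / 10) ^ β) ≤ δ := by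
    have h1 : (2 : ℝ) ^ β * (7 / 10) ^ β = ((7 : ℝ) / 5) ^ β := by
      rw [← mul_pow]; norm_num
    have h2 : ((7 : ℝ) / 5) ^ β = ((49 : ℝ) / 25) ^ ((β : ℝ) / 2) := by
      rw [show ((49 : ℝ) / 25) = ((7 : ℝ) / 5) ^ (2 : ℝ) by
        rw [show (2:ℝ) = ((2:ℕ):ℝ) by norm_num, Real.rpow_natCast]; norm_num]
      rw [← Real.rpow_natCast ((7:ℝ)/5) β, ← Real.rpow_mul (by norm_num),
        show (2:ℝ) * ((β:ℝ)/2) = (β:ℝ) by ring]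
    have h3 : x * ((49 : ℝ) / 25) ^ ((β : ℝ) / 2) = ((21 : ℝ) / 25) ^ ((β : ℝ) / 2) := by
      rw [hxdef, ← Real.mul_rpow (by norm_num) (by norm_num)]
      norm_num
    calc (2 : ℝ) ^ β * (x * (7 / 10) ^ β)
        = x * ((2 : ℝ) ^ β * (7 / 10) ^ β) := by ring
      _ = ((21 : ℝ) / 25) ^ ((β : ℝ) / 2) := by rw [h1, h2, h3]
      _ ≤ δ := by
        rw [← Real.exp_log hδ0, Real.rpow_def_of_pos (by norm_num)]
        apply Real.exp_le_exp.mpr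
        have hlog : Real.log (21 / 25) ≤ 21 / 25 - 1 :=
          Real.log_le_sub_one_of_pos (by norm_num)
        have hLδ : L = -Real.log δ := by rw [hLdef, one_div, Real.log_inv]
        have hb0 : (0:ℝ) ≤ (β:ℝ) := Nat.cast_nonneg _
        nlinarith [mul_nonneg hb0 (by linarith : (0:ℝ) ≤ -4/25 - Real.log (21/25))]
  linarith
end
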